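/- arXiv:1709.01629 — 8 statements merged into one kernel-verified Lean document; each statement's English description precedes it below -/
import Mathlib

section
/- For every power-allocation coefficient b with 0 ≤ b < 1, the QoS constraint min(γ_p(b), γ_{s→p}(b)) ≥ γ holds if and only if b ≤ (β·ρ − γ)/((γ + 1)·β·ρ), where β = min(h, g). -/
private lemma key (ρ x γ b : ℝ) (hρ : 0 < ρ) (hx : 0 < x) (hγ : 0 < γ) (hb0 : 0 ≤ b) :
    (1 - b) * x / (b * x + 1 / ρ) ≥ γ ↔ b ≤ (x * ρ - γ) / ((γ + 1) * x * ρ) := by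
  have hd : 0 < b * x + 1 / ρ := by positivity
  rw [ge_iff_le, le_div_iff₀ hd, le_div_iff₀ (by positivity : (0:ℝ) < (γ + 1) * x * ρ)]
  have hρ' : (1:ℝ)/ρ * ρ = 1 := by field_simp
  constructor
  · intro h1
    nlinarith [mul_le_mul_of_nonneg_right h1 hρ.le]
  · intro h1
    nlinarith [mul_pos hρ hx, mul_le_mul_of_nonneg_right h1 hρ.le]

private lemma mono (ρ γ x y : ℝ) (hρ : 0 < ρ) (hx : 0 < x) (hγ : 0 < γ) (hxy : x ≤ y) :
    (x * ρ - γ) / ((γ + 1) * x * ρ) ≤ (y * ρ - γ) / ((γ + 1) * y * ρ) := by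
  have hy : 0 < y := lt_of_lt_of_le hx hxy
  rw [div_le_div_iff₀ (by positivity) (by positivity)]
  nlinarith [mul_pos hρ hγ, mul_pos (mul_pos hρ hγ) hγ]

/-- In a two-user downlink NOMA system with transmit SNR `ρ > 0`,
power-allocation coefficient `b` (with `a = 1 - b`, `0 ≤ b < 1`), primary channel gain
`h > 0`, secondary channel gain `g > 0`, and primary QoS threshold `γ > 0`, the QoS
constraint `min (γ_p b) (γ_sp b) ≥ γ` holds iff `b ≤ (β·ρ - γ)/((γ+1)·β·ρ)`,
where `β = min h g`. -/
theorem stmt0 (ρ h g γ b : ℝ) (hρ : 0 < ρ) (hh : 0 < h) (hg : 0 < g) (hγ : 0 < γ)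
    (hb0 : 0 ≤ b) (hb1 : b < 1) :
    min ((1 - b) * h / (b * h + 1 / ρ)) ((1 - b) * g / (b * g + 1 / ρ)) ≥ γ ↔
      b ≤ (min h g * ρ - γ) / ((γ + 1) * (min h g) * ρ) := by
  rw [ge_iff_le, le_min_iff, ← ge_iff_le, ← ge_iff_le, key ρ h γ b hρ hh hγ hb0,
    key ρ g γ b hρ hg hγ hb0]
  rcases le_total h g with hle | hle
  · rw [min_eq_left hle]
    exact ⟨fun ⟨h1, _⟩ => h1, fun h1 => ⟨h1, h1.trans (mono ρ γ h g hρ hh hγ hle)⟩⟩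
  · rw [min_eq_right hle]
    exact ⟨fun ⟨_, h2⟩ => h2, fun h1 => ⟨h1.trans (mono ρ γ g h hρ hg hγ hle), h1⟩⟩
end

section
/- If β·ρ > γ and b = (β·ρ − γ)/((γ + 1)·β·ρ) with a = 1 − b, then min(γ_p(b), γ_{s→p}(b)) = γ, i.e., with the optimal power allocation the QoS constraint of the primary user is met with equality at the weaker of the two channels. -/
/-- If `β·ρ > γ` (with `β = min h g`) and
`b = (β·ρ - γ)/((γ+1)·β·ρ)`, `a = 1 - b`, then the QoS constraint of the primary
user is met with equality at the weaker channel: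
`min (a·h/(b·h + 1/ρ)) (a·g/(b·g + 1/ρ)) = γ`. -/
theorem stmt2 (ρ h g γ b a : ℝ) (hρ : 0 < ρ) (hh : 0 < h) (hg : 0 < g) (hγ : 0 < γ)
    (hβρ : min h g * ρ > γ)
    (hb : b = (min h g * ρ - γ) / ((γ + 1) * (min h g) * ρ)) (ha : a = 1 - b) :
    min (a * h / (b * h + 1 / ρ)) (a * g / (b * g + 1 / ρ)) = γ := by
  have hβ : 0 < min h g := lt_min hh hg
  set β := min h g with hβdef
  have hd : (0:ℝ) < (γ + 1) * β * ρ := by positivity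
  have hb0 : 0 ≤ b := by
    rw [hb]; exact div_nonneg (by linarith) hd.le
  have ha0 : 0 ≤ a := by
    rw [ha, hb, sub_nonneg, div_le_one hd]
    nlinarith
  have hden : ∀ x : ℝ, 0 < x → 0 < b * x + 1 / ρ := fun x hx => by positivity
  have mono : ∀ x y : ℝ, 0 < x → x ≤ y →
      a * x / (b * x + 1 / ρ) ≤ a * y / (b * y + 1 / ρ) := by
    intro x y hx hxy
    rw [div_le_div_iff₀ (hden x hx) (hden y (hx.trans_le hxy))]
    nlinarith [mul_nonneg (mul_nonneg ha0 (sub_nonneg.2 hxy)) (le_of_lt (one_div_pos.2 hρ))]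
  have fval : a * β / (b * β + 1 / ρ) = γ := by
    rw [eq_comm, eq_div_iff (ne_of_gt (hden β hβ))]
    rw [ha, hb]
    field_simp
    ring
  rcases le_total h g with hle | hle
  · have hβh : β = h := min_eq_left hle
    rw [min_eq_left (mono h g hh hle), ← hβh]
    exact fval
  · have hβg : β = g := min_eq_right hle
    rw [min_eq_right (mono g h hg hle), ← hβg]
    exact fval
end

section
/- Let N, M, K be positive integers and let H : Fin N → Fin M → ℝ and G : Fin N → Fin K → ℝ take positive values. Then the maximum of f(H n m, G n k) over all triples (n, m, k) equals the maximum over n of f(h⁽ⁿ⁾, g⁽ⁿ⁾), where h⁽ⁿ⁾ = max_m H n m and g⁽ⁿ⁾ = max_k G n k. In other words, the subset-based joint antenna selection over row maxima achieves the same maximal secondary SNR as an exhaustive search over all antenna triples. -/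
/-- For `ρ > 0`, `γ > 0` and the achievable secondary SNR `f`,
given positive channel gains `H : Fin N → Fin M → ℝ` and `G : Fin N → Fin K → ℝ`,
the maximum of `f (H n m) (G n k)` over all triples `(n, m, k)` equals the maximum
over `n` of `f h⁽ⁿ⁾ g⁽ⁿ⁾` where `h⁽ⁿ⁾ = max_m H n m` and `g⁽ⁿ⁾ = max_k G n k`:
the subset-based joint antenna selection achieves the same maximal secondary SNR
as exhaustive search. -/
theorem stmt4 (ρ γ : ℝ) (hρ : 0 < ρ) (hγ : 0 < γ)
    (f : ℝ → ℝ → ℝ)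
    (hf : ∀ h g : ℝ, f h g =
      if γ / ρ < min h g then g * (min h g * ρ - γ) / ((γ + 1) * min h g) else 0)
    (N M K : ℕ) (hN : 0 < N) (hM : 0 < M) (hK : 0 < K)
    (H : Fin N → Fin M → ℝ) (G : Fin N → Fin K → ℝ)
    (hH : ∀ n m, 0 < H n m) (hG : ∀ n k, 0 < G n k) :
    Finset.univ.sup' ⟨(⟨0, hN⟩, ⟨0, hM⟩, ⟨0, hK⟩), Finset.mem_univ _⟩
        (fun p : Fin N × Fin M × Fin K => f (H p.1 p.2.1) (G p.1 p.2.2)) =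
      Finset.univ.sup' ⟨⟨0, hN⟩, Finset.mem_univ _⟩
        (fun n : Fin N =>
          f (Finset.univ.sup' ⟨⟨0, hM⟩, Finset.mem_univ _⟩ (H n))
            (Finset.univ.sup' ⟨⟨0, hK⟩, Finset.mem_univ _⟩ (G n))) := by
  have fmono : ∀ h g h' g' : ℝ, h ≤ h' → g ≤ g' → f h g ≤ f h' g' := by
    intro h g h' g' hh hg
    rw [hf, hf]
    have hmin : min h g ≤ min h' g' := min_le_min hh hg
    by_cases hc : γ / ρ < min h g
    · have hc' : γ / ρ < min h' g' := lt_of_lt_of_le hc hmin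
      rw [if_pos hc, if_pos hc']
      have hm0 : 0 < min h g := lt_trans (div_pos hγ hρ) hc
      have hm0' : 0 < min h' g' := lt_trans (div_pos hγ hρ) hc'
      have hγm : γ < min h g * ρ := (div_lt_iff₀ hρ).mp hc
      have hγm' : γ < min h' g' * ρ := (div_lt_iff₀ hρ).mp hc'
      have hg0 : 0 < g := lt_of_lt_of_le hm0 (min_le_right _ _)
      rw [div_le_div_iff₀ (by positivity) (by positivity)]
      have key1 : (min h g * ρ - γ) * min h' g' ≤ (min h' g' * ρ - γ) * min h g := by
        nlinarith [mul_le_mul_of_nonneg_left hmin hγ.le]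
      have key2 : g * ((min h g * ρ - γ) * min h' g') ≤ g * ((min h' g' * ρ - γ) * min h g) :=
        mul_le_mul_of_nonneg_left key1 hg0.le
      have key3 : g * ((min h' g' * ρ - γ) * min h g) ≤ g' * ((min h' g' * ρ - γ) * min h g) :=
        mul_le_mul_of_nonneg_right hg (mul_nonneg (sub_nonneg.mpr hγm'.le) hm0.le)
      nlinarith [mul_le_mul_of_nonneg_left (le_trans key2 key3) (by linarith : (0:ℝ) ≤ γ + 1)]
    · rw [if_neg hc]
      split
      next hc' =>
        have hm0' : 0 < min h' g' := lt_trans (div_pos hγ hρ) hc'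
        have hγm' : γ < min h' g' * ρ := (div_lt_iff₀ hρ).mp hc'
        have hg0' : 0 < g' := lt_of_lt_of_le hm0' (min_le_right _ _)
        exact div_nonneg (mul_nonneg hg0'.le (sub_nonneg.mpr hγm'.le))
          (mul_nonneg (by linarith) hm0'.le)
      next => exact le_refl 0
  refine le_antisymm ?_ ?_
  · apply Finset.sup'_le
    rintro ⟨n, m, k⟩ -
    refine le_trans ?_ (Finset.le_sup' _ (Finset.mem_univ n))
    exact fmono _ _ _ _ (Finset.le_sup' (H n) (Finset.mem_univ m))
      (Finset.le_sup' (G n) (Finset.mem_univ k))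
  · apply Finset.sup'_le
    rintro n -
    obtain ⟨m, -, hm⟩ := Finset.exists_mem_eq_sup' ⟨⟨0, hM⟩, Finset.mem_univ _⟩ (H n)
    obtain ⟨k, -, hk⟩ := Finset.exists_mem_eq_sup' ⟨⟨0, hK⟩, Finset.mem_univ _⟩ (G n)
    rw [hm, hk]
    exact Finset.le_sup' (fun p : Fin N × Fin M × Fin K => f (H p.1 p.2.1) (G p.1 p.2.2))
      (Finset.mem_univ (n, m, k))
end

section
/- Let N, M, K be positive integers, let H : Fin N → Fin M → ℝ and G : Fin N → Fin K → ℝ take positive values, let ρ > 0, γ > 0 and let γ_s > 0 be the secondary detection threshold. If some triple (n, m, k) satisfies min(H n m, G n k) > γ/ρ and f(H n m, G n k) ≥ γ_s, then there exists n' with min(h⁽ⁿ'⁾, g⁽ⁿ'⁾) > γ/ρ and f(h⁽ⁿ'⁾, g⁽ⁿ'⁾) ≥ γ_s, where h⁽ⁿ⁾ = max_m H n m and g⁽ⁿ⁾ = max_k G n k. Consequently, whenever the subset-based joint antenna selection is in outage, every possible joint antenna selection is in outage, so no joint antenna-selection strategy achieves a lower outage probability than the subset-based joint antenna selection. -/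
lemma stmt6_mono (ρ γ : ℝ) (hρ : 0 < ρ) (hγ : 0 < γ)
    (g g' m m' : ℝ) (hm : γ / ρ < m) (hmm : m ≤ m') (hg : 0 < g) (hgg : g ≤ g') :
    g * (m * ρ - γ) / ((γ + 1) * m) ≤ g' * (m' * ρ - γ) / ((γ + 1) * m') := by
  have hm0 : 0 < m := lt_trans (div_pos hγ hρ) hm
  have hm0' : 0 < m' := lt_of_lt_of_le hm0 hmm
  have hγ1 : 0 < γ + 1 := by linarith
  have hρm : γ < m * ρ := by
    have := (div_lt_iff₀ hρ).mp hm
    linarith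
  rw [div_le_div_iff₀ (by positivity) (by positivity)]
  nlinarith [mul_nonneg (mul_nonneg (sub_nonneg.mpr hgg) hm0'.le) (sub_nonneg.mpr hρm.le),
    mul_nonneg (mul_nonneg hγ.le hg.le) (sub_nonneg.mpr hmm),
    mul_nonneg (mul_nonneg (sub_nonneg.mpr hgg) hγ.le) (sub_nonneg.mpr hmm)]

/-- With the achievable secondary SNR `f`, positive channel gains,
`ρ > 0`, primary threshold `γ > 0` and secondary threshold `γs > 0`: if some
triple `(n, m, k)` satisfies `min (H n m) (G n k) > γ/ρ` and `f (H n m) (G n k) ≥ γs`,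
then some `n'` satisfies `min h⁽ⁿ'⁾ g⁽ⁿ'⁾ > γ/ρ` and `f h⁽ⁿ'⁾ g⁽ⁿ'⁾ ≥ γs`
(where `h⁽ⁿ⁾ = max_m H n m`, `g⁽ⁿ⁾ = max_k G n k`).  Consequently, whenever the
subset-based joint antenna selection is in outage, every joint antenna selection
`(n, m, k)` is in outage. -/
theorem stmt6 (ρ γ γs : ℝ) (hρ : 0 < ρ) (hγ : 0 < γ) (hγs : 0 < γs)
    (f : ℝ → ℝ → ℝ)
    (hf : ∀ h g : ℝ, f h g =
      if γ / ρ < min h g then g * (min h g * ρ - γ) / ((γ + 1) * min h g) else 0)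
    (N M K : ℕ) (hN : 0 < N) (hM : 0 < M) (hK : 0 < K)
    (H : Fin N → Fin M → ℝ) (G : Fin N → Fin K → ℝ)
    (hH : ∀ n m, 0 < H n m) (hG : ∀ n k, 0 < G n k) :
    ((∃ (n : Fin N) (m : Fin M) (k : Fin K),
        min (H n m) (G n k) > γ / ρ ∧ f (H n m) (G n k) ≥ γs) →
      (∃ n' : Fin N,
        min (Finset.univ.sup' ⟨⟨0, hM⟩, Finset.mem_univ _⟩ (H n'))
            (Finset.univ.sup' ⟨⟨0, hK⟩, Finset.mem_univ _⟩ (G n')) > γ / ρ ∧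
        f (Finset.univ.sup' ⟨⟨0, hM⟩, Finset.mem_univ _⟩ (H n'))
            (Finset.univ.sup' ⟨⟨0, hK⟩, Finset.mem_univ _⟩ (G n')) ≥ γs)) ∧
    ((¬ ∃ n' : Fin N,
        min (Finset.univ.sup' ⟨⟨0, hM⟩, Finset.mem_univ _⟩ (H n'))
            (Finset.univ.sup' ⟨⟨0, hK⟩, Finset.mem_univ _⟩ (G n')) > γ / ρ ∧
        f (Finset.univ.sup' ⟨⟨0, hM⟩, Finset.mem_univ _⟩ (H n'))
            (Finset.univ.sup' ⟨⟨0, hK⟩, Finset.mem_univ _⟩ (G n')) ≥ γs) →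
      ∀ (n : Fin N) (m : Fin M) (k : Fin K),
        min (H n m) (G n k) ≤ γ / ρ ∨ f (H n m) (G n k) < γs) := by
  have main : (∃ (n : Fin N) (m : Fin M) (k : Fin K),
        min (H n m) (G n k) > γ / ρ ∧ f (H n m) (G n k) ≥ γs) →
      (∃ n' : Fin N,
        min (Finset.univ.sup' ⟨⟨0, hM⟩, Finset.mem_univ _⟩ (H n'))
            (Finset.univ.sup' ⟨⟨0, hK⟩, Finset.mem_univ _⟩ (G n')) > γ / ρ ∧
        f (Finset.univ.sup' ⟨⟨0, hM⟩, Finset.mem_univ _⟩ (H n'))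
            (Finset.univ.sup' ⟨⟨0, hK⟩, Finset.mem_univ _⟩ (G n')) ≥ γs) := by
    rintro ⟨n, m, k, h1, h2⟩
    refine ⟨n, ?_, ?_⟩
    · exact lt_of_lt_of_le h1 (min_le_min
        (Finset.le_sup' (H n) (Finset.mem_univ m))
        (Finset.le_sup' (G n) (Finset.mem_univ k)))
    · have hh' : H n m ≤ Finset.univ.sup' ⟨⟨0, hM⟩, Finset.mem_univ _⟩ (H n) :=
        Finset.le_sup' (H n) (Finset.mem_univ m)
      have hg' : G n k ≤ Finset.univ.sup' ⟨⟨0, hK⟩, Finset.mem_univ _⟩ (G n) :=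
        Finset.le_sup' (G n) (Finset.mem_univ k)
      have hmin : min (H n m) (G n k) ≤
          min (Finset.univ.sup' ⟨⟨0, hM⟩, Finset.mem_univ _⟩ (H n))
              (Finset.univ.sup' ⟨⟨0, hK⟩, Finset.mem_univ _⟩ (G n)) :=
        min_le_min hh' hg'
      have h1' := lt_of_lt_of_le h1 hmin
      rw [hf, if_pos h1']
      rw [hf, if_pos h1] at h2
      calc γs ≤ _ := h2
        _ ≤ _ := stmt6_mono ρ γ hρ hγ _ _ _ _ h1 hmin (hG n k) hg'
  refine ⟨main, fun hno n m k => ?_⟩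
  by_contra hc
  push_neg at hc
  exact hno (main ⟨n, m, k, hc.1, hc.2⟩)
end

section
/- If H and G are independent, then for all real c₁ ≥ 0 and c₂ > 0, P(c₁ < G ≤ c₁ + c₂ and H ≥ G) = Σ_{m=1}^{M} Σ_{k=1}^{K} (−1)^{m+k} · C(M, m) · C(K, k) · (k·Ω_g / (m·Ω_h + k·Ω_g)) · e^{−(m·Ω_h + k·Ω_g)·c₁} · (1 − e^{−(m·Ω_h + k·Ω_g)·c₂}), where C(·,·) denotes the binomial coefficient. -/
open MeasureTheory ProbabilityTheory Real Set Filter Topology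


lemma binFull (n : ℕ) (v : ℝ) :
    ∑ i ∈ Finset.range (n+1), (-1:ℝ)^i * (n.choose i) * v^i = (1-v)^n := by
  have h := add_pow (-v) (1:ℝ) n
  rw [show (1:ℝ)-v = -v+1 by ring, h]
  refine Finset.sum_congr rfl fun i _ => ?_
  rw [neg_pow, one_pow]
  ring

lemma binA (M : ℕ) (hM : 0 < M) (u : ℝ) :
    ∑ m ∈ Finset.Icc 1 M, (-1:ℝ)^m * (M.choose m) * u^m = (1-u)^M - 1 := by
  have h0 : Finset.range (M+1) = insert 0 (Finset.Icc 1 M) := by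
    ext x; simp [Finset.mem_range, Finset.mem_Icc]; omega
  have h := binFull M u
  rw [h0, Finset.sum_insert (by simp)] at h
  simp only [pow_zero, Nat.choose_zero_right, Nat.cast_one, mul_one, one_mul] at h
  linarith

lemma binB (K : ℕ) (hK : 0 < K) (v : ℝ) :
    ∑ k ∈ Finset.Icc 1 K, (-1:ℝ)^k * (K.choose k) * k * v^k
      = -((K:ℝ) * v * (1-v)^(K-1)) := by
  obtain ⟨n, rfl⟩ : ∃ n, K = n + 1 := ⟨K - 1, by omega⟩
  have h0 : Finset.Icc 1 (n+1) = Finset.Ico 1 (n+2) := by rw [← Finset.Ico_add_one_right_eq_Icc]; rfl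
  rw [h0, Finset.sum_Ico_eq_sum_range]
  have h1 : n + 2 - 1 = n + 1 := by omega
  rw [h1]
  have key : ∀ i, (-1:ℝ)^(1+i) * ((n+1).choose (1+i)) * (↑(1+i)) * v^(1+i)
      = -(((n:ℝ)+1) * v * ((-1:ℝ)^i * (n.choose i) * v^i)) := by
    intro i
    have hc : (((n+1).choose (1+i) : ℝ)) * (↑(1+i)) = ((n:ℝ)+1) * (n.choose i) := by
      rw [add_comm 1 i]
      exact_mod_cast congrArg (Nat.cast (R := ℝ)) (Nat.add_one_mul_choose_eq n i).symm
    have : ((1:ℕ)+i : ℝ) = 1 + (i:ℝ) := by push_cast; ring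
    calc (-1:ℝ)^(1+i) * ((n+1).choose (1+i)) * (↑(1+i)) * v^(1+i)
        = (-1:ℝ)^(1+i) * ((((n+1).choose (1+i) : ℝ)) * (↑(1+i))) * v^(1+i) := by ring
      _ = (-1:ℝ)^(1+i) * (((n:ℝ)+1) * (n.choose i)) * v^(1+i) := by rw [hc]
      _ = -(((n:ℝ)+1) * v * ((-1:ℝ)^i * (n.choose i) * v^i)) := by
          rw [pow_add, pow_add]; ring
  simp only [key]
  rw [Finset.sum_neg_distrib]
  congr 1
  rw [← Finset.mul_sum, binFull]
  push_cast
  ring_nf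


lemma aux_Ici (ν : Measure ℝ) [IsProbabilityMeasure ν] (F : ℝ → ℝ) (hF : Continuous F)
    (h : ∀ x, (ν (Iic x)).toReal = F x) (g : ℝ) :
    ν (Ici g) = ENNReal.ofReal (1 - F g) := by
  have hIic : ∀ x, ν (Iic x) = ENNReal.ofReal (F x) := fun x => by
    rw [← h x, ENNReal.ofReal_toReal (measure_ne_top ν _)]
  have hmono : Monotone (fun n : ℕ => Iic (g - ((n:ℝ)+1)⁻¹)) := by
    intro a b hab
    refine Iic_subset_Iic.2 ?_
    have hab' : ((a:ℝ)+1) ≤ ((b:ℝ)+1) := by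
      have : (a:ℝ) ≤ b := Nat.cast_le.2 hab
      linarith
    have : ((b:ℝ)+1)⁻¹ ≤ ((a:ℝ)+1)⁻¹ := by
      apply inv_anti₀ (by positivity) hab'
    linarith
  have hunion : ⋃ n : ℕ, Iic (g - ((n:ℝ)+1)⁻¹) = Iio g := by
    ext x
    simp only [mem_iUnion, mem_Iic, mem_Iio]
    constructor
    · rintro ⟨n, hn⟩
      have : (0:ℝ) < ((n:ℝ)+1)⁻¹ := by positivity
      linarith
    · intro hx
      obtain ⟨n, hn⟩ := exists_nat_one_div_lt (show (0:ℝ) < g - x by linarith)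
      refine ⟨n, ?_⟩
      rw [one_div] at hn
      linarith
  have h1 : Tendsto (fun n : ℕ => ν (Iic (g - ((n:ℝ)+1)⁻¹))) atTop (𝓝 (ν (Iio g))) := by
    rw [← hunion]
    exact tendsto_measure_iUnion_atTop hmono
  have h2 : Tendsto (fun n : ℕ => ν (Iic (g - ((n:ℝ)+1)⁻¹))) atTop
      (𝓝 (ENNReal.ofReal (F g))) := by
    simp only [hIic]
    refine (ENNReal.continuous_ofReal.tendsto _).comp ?_
    refine (hF.tendsto g).comp ?_
    have hn : Tendsto (fun n : ℕ => ((n:ℝ)+1)⁻¹) atTop (𝓝 0) := by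
      simpa only [one_div] using tendsto_one_div_add_atTop_nhds_zero_nat (𝕜 := ℝ)
    have h3 : Tendsto (fun _ : ℕ => g) atTop (𝓝 g) := tendsto_const_nhds
    simpa using h3.sub hn
  have hIio : ν (Iio g) = ENNReal.ofReal (F g) := tendsto_nhds_unique h1 h2
  have hFg0 : 0 ≤ F g := (h g) ▸ ENNReal.toReal_nonneg
  have : ν (Ici g) = 1 - ENNReal.ofReal (F g) := by
    rw [← hIio, ← compl_Iio (a := g), measure_compl measurableSet_Iio (measure_ne_top ν _),
      measure_univ]
  rw [this, ← ENNReal.ofReal_one, ← ENNReal.ofReal_sub _ hFg0]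
/-- If `H` and `G` are independent with CDFs `(1 - e^{-Ωh x})^M` and
`(1 - e^{-Ωg x})^K` for `x ≥ 0` (and `0` for `x < 0`), then for `c₁ ≥ 0` and `c₂ > 0`,
`P(c₁ < G ≤ c₁ + c₂ ∧ H ≥ G)
  = Σ_{m=1}^{M} Σ_{k=1}^{K} (-1)^{m+k}·C(M,m)·C(K,k)·(k·Ωg/(m·Ωh + k·Ωg))
      · e^{-(m·Ωh + k·Ωg)·c₁} · (1 - e^{-(m·Ωh + k·Ωg)·c₂})`. -/
theorem stmt8 {Ω : Type*} [MeasurableSpace Ω] (μ : Measure Ω) [IsProbabilityMeasure μ]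
    (H G : Ω → ℝ) (hHm : Measurable H) (hGm : Measurable G)
    (M K : ℕ) (hM : 0 < M) (hK : 0 < K)
    (Ωh Ωg : ℝ) (hΩh : 0 < Ωh) (hΩg : 0 < Ωg)
    (hind : IndepFun H G μ)
    (hHcdf : ∀ x : ℝ, 0 ≤ x → (μ {ω | H ω ≤ x}).toReal = (1 - exp (-(Ωh * x))) ^ M)
    (hHneg : ∀ x : ℝ, x < 0 → μ {ω | H ω ≤ x} = 0)
    (hGcdf : ∀ x : ℝ, 0 ≤ x → (μ {ω | G ω ≤ x}).toReal = (1 - exp (-(Ωg * x))) ^ K)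
    (hGneg : ∀ x : ℝ, x < 0 → μ {ω | G ω ≤ x} = 0) :
    ∀ c₁ c₂ : ℝ, 0 ≤ c₁ → 0 < c₂ →
      (μ {ω | (c₁ < G ω ∧ G ω ≤ c₁ + c₂) ∧ H ω ≥ G ω}).toReal =
        ∑ m ∈ Finset.Icc 1 M, ∑ k ∈ Finset.Icc 1 K,
          (-1 : ℝ) ^ (m + k) * (M.choose m) * (K.choose k) *
            ((k : ℝ) * Ωg / ((m : ℝ) * Ωh + (k : ℝ) * Ωg)) *
            exp (-(((m : ℝ) * Ωh + (k : ℝ) * Ωg) * c₁)) *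
            (1 - exp (-(((m : ℝ) * Ωh + (k : ℝ) * Ωg) * c₂))) := by
  intro c₁ c₂ hc₁ hc₂
  set b := c₁ + c₂ with hb
  have hbc : c₁ ≤ b := by rw [hb]; linarith
  haveI hPH : IsProbabilityMeasure (μ.map H) := Measure.isProbabilityMeasure_map hHm.aemeasurable
  haveI hPG : IsProbabilityMeasure (μ.map G) := Measure.isProbabilityMeasure_map hGm.aemeasurable
  -- CDF of H and its consequence
  set FH : ℝ → ℝ := fun x => if 0 ≤ x then (1 - exp (-(Ωh*x)))^M else 0 with hFH
  have hFHc : Continuous FH := by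
    have hA : Continuous fun x : ℝ => (1 - exp (-(Ωh*x)))^M := by fun_prop
    refine Continuous.if_le hA continuous_const continuous_const continuous_id fun x hx => ?_
    rw [← hx]
    simp [zero_pow hM.ne']
  have hFHeq : ∀ x, ((μ.map H) (Iic x)).toReal = FH x := by
    intro x
    rw [Measure.map_apply hHm measurableSet_Iic]
    rcases le_or_gt 0 x with hx | hx
    · rw [hFH]; simp only [if_pos hx]; exact hHcdf x hx
    · rw [hFH]; simp only [if_neg (not_le.2 hx)]
      have h0 : μ (H ⁻¹' Iic x) = 0 := hHneg x hx
      simp [h0]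
  have hμHIci : ∀ g : ℝ, (μ.map H) (Ici g) = ENNReal.ofReal (1 - FH g) :=
    aux_Ici (μ.map H) FH hFHc hFHeq
  -- density of G
  set gdr : ℝ → ℝ := fun x => (K:ℝ)*Ωg*exp (-(Ωg*x))*(1-exp (-(Ωg*x)))^(K-1) with hgdr
  have hgdrc : Continuous gdr := by rw [hgdr]; fun_prop
  have hgdrpos : ∀ x : ℝ, 0 ≤ x → 0 ≤ gdr x := by
    intro x hx
    have h1 : exp (-(Ωg*x)) ≤ 1 := by
      rw [exp_le_one_iff]
      have : 0 ≤ Ωg * x := mul_nonneg hΩg.le hx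
      linarith
    rw [hgdr]
    have := exp_nonneg (-(Ωg*x))
    have hK0 : (0:ℝ) ≤ K := Nat.cast_nonneg K
    apply mul_nonneg (mul_nonneg (mul_nonneg hK0 hΩg.le) (exp_nonneg _))
    exact pow_nonneg (by linarith) _
  set gd : ℝ → ℝ := fun x => if 0 ≤ x then gdr x else 0 with hgd
  have hgdm : Measurable gd :=
    Measurable.ite (measurableSet_le measurable_const measurable_id) hgdrc.measurable
      measurable_const
  have hgd0 : ∀ x, 0 ≤ gd x := by
    intro x
    rw [hgd]
    by_cases hx : 0 ≤ x
    · simp only [if_pos hx]; exact hgdrpos x hx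
    · simp [if_neg hx]
  -- FTC for the G density
  have hGderiv : ∀ x : ℝ, HasDerivAt (fun t => (1-exp (-(Ωg*t)))^K) (gdr x) x := by
    intro x
    have h1 : HasDerivAt (fun t:ℝ => -(Ωg*t)) (-Ωg) x := by
      simpa using ((hasDerivAt_id x).const_mul Ωg).fun_neg
    have h2 := h1.exp
    have h3 := (hasDerivAt_const x (1:ℝ)).fun_sub h2
    have h4 := h3.fun_pow K
    refine h4.congr_deriv ?_
    rw [hgdr]
    ring
  have hgint : ∀ a : ℝ, 0 ≤ a →
      ∫ x in (0:ℝ)..a, gdr x = (1-exp (-(Ωg*a)))^K := by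
    intro a ha
    rw [intervalIntegral.integral_eq_sub_of_hasDerivAt (fun x _ => hGderiv x)
      (hgdrc.intervalIntegrable 0 a)]
    simp [zero_pow hK.ne']
  -- μ.map G is the density measure
  set ν : Measure ℝ := volume.withDensity (fun x => ENNReal.ofReal (gd x)) with hν
  have hνIic : ∀ a : ℝ, (μ.map G) (Iic a) = ν (Iic a) := by
    intro a
    rw [Measure.map_apply hGm measurableSet_Iic, hν, withDensity_apply _ measurableSet_Iic]
    rcases lt_or_ge a 0 with ha | ha
    · have h0 : μ (G ⁻¹' Iic a) = 0 := hGneg a ha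
      rw [h0]
      have hz : ∀ x ∈ Iic a, ENNReal.ofReal (gd x) = 0 := by
        intro x hx
        have : ¬ (0 ≤ x) := by simp only [mem_Iic] at hx; linarith
        rw [hgd]; simp [if_neg this]
      rw [setLIntegral_congr_fun measurableSet_Iic hz, lintegral_zero]
    · have hsplit : Iic a = Iio 0 ∪ Icc 0 a := by
        ext x
        simp only [mem_Iic, mem_union, mem_Iio, mem_Icc]
        constructor
        · intro hx; rcases lt_or_ge x 0 with h | h
          · exact Or.inl h
          · exact Or.inr ⟨h, hx⟩
        · rintro (h | ⟨h1, h2⟩) <;> linarith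
      have hdisj : Disjoint (Iio (0:ℝ)) (Icc 0 a) := by
        rw [Set.disjoint_left]
        intro x hx hx2
        exact absurd hx2.1 (not_le.2 hx)
      have hz1 : ∫⁻ x in Iio (0:ℝ), ENNReal.ofReal (gd x) = 0 := by
        have hz : ∀ x ∈ Iio (0:ℝ), ENNReal.ofReal (gd x) = 0 := by
          intro x hx
          rw [hgd]; simp [if_neg (not_le.2 (mem_Iio.1 hx))]
        rw [setLIntegral_congr_fun measurableSet_Iio hz, lintegral_zero]
      have hz2 : ∫⁻ x in Icc (0:ℝ) a, ENNReal.ofReal (gd x)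
          = ENNReal.ofReal ((1-exp (-(Ωg*a)))^K) := by
        have hcong : ∀ x ∈ Icc (0:ℝ) a, ENNReal.ofReal (gd x) = ENNReal.ofReal (gdr x) := by
          intro x hx
          rw [hgd]; simp [if_pos hx.1]
        rw [setLIntegral_congr_fun measurableSet_Icc hcong]
        rw [← ofReal_integral_eq_lintegral_ofReal (hgdrc.integrableOn_Icc)
          ((ae_restrict_iff' measurableSet_Icc).2 (ae_of_all _ fun x hx => hgdrpos x hx.1))]
        rw [integral_Icc_eq_integral_Ioc, ← intervalIntegral.integral_of_le ha, hgint a ha]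
      have hfin : μ (G ⁻¹' Iic a) ≠ ⊤ := measure_ne_top μ _
      have ht : (μ (G ⁻¹' Iic a)).toReal = (1-exp (-(Ωg*a)))^K := hGcdf a ha
      have hR : ∫⁻ x in Iic a, ENNReal.ofReal (gd x)
          = ENNReal.ofReal ((1-exp (-(Ωg*a)))^K) := by
        rw [hsplit, lintegral_union measurableSet_Icc hdisj, hz1, hz2, zero_add]
      rw [hR, ← ht, ENNReal.ofReal_toReal hfin]
  have hμGν : μ.map G = ν := Measure.ext_of_Iic (μ.map G) ν hνIic
  -- joint measure via independence
  have hmap : μ.map (fun ω => (H ω, G ω)) = (μ.map H).prod (μ.map G) :=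
    (indepFun_iff_map_prod_eq_prod_map_map hHm.aemeasurable hGm.aemeasurable).mp hind
  set S : Set (ℝ × ℝ) := {p | (c₁ < p.2 ∧ p.2 ≤ b) ∧ p.2 ≤ p.1} with hS
  have hSm : MeasurableSet S := by
    have : S = {p : ℝ × ℝ | c₁ < p.2} ∩ ({p : ℝ × ℝ | p.2 ≤ b} ∩ {p : ℝ × ℝ | p.2 ≤ p.1}) := by
      ext p; simp [hS]; tauto
    rw [this]
    exact (measurableSet_lt measurable_const measurable_snd).inter
      ((measurableSet_le measurable_snd measurable_const).inter
        (measurableSet_le measurable_snd measurable_fst))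
  have h1 : μ {ω | (c₁ < G ω ∧ G ω ≤ b) ∧ H ω ≥ G ω} = ((μ.map H).prod (μ.map G)) S := by
    rw [← hmap, Measure.map_apply (hHm.prodMk hGm) hSm]
    rfl
  have h2 : ((μ.map H).prod (μ.map G)) S = ∫⁻ g, (μ.map H) ((fun h => (h, g)) ⁻¹' S) ∂(μ.map G) :=
    Measure.prod_apply_symm hSm
  have hslice : (fun g => (μ.map H) ((fun h => (h, g)) ⁻¹' S))
      = (Ioc c₁ b).indicator (fun g => (μ.map H) (Ici g)) := by
    funext g
    by_cases hg : g ∈ Ioc c₁ b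
    · rw [indicator_of_mem hg]
      congr 1
      ext h
      simp only [hS, mem_preimage, mem_setOf_eq, mem_Ici]
      rw [mem_Ioc] at hg
      tauto
    · rw [indicator_of_notMem hg]
      have he : ((fun h => (h, g)) ⁻¹' S) = ∅ := by
        ext h
        simp only [hS, mem_preimage, mem_setOf_eq, mem_empty_iff_false, iff_false]
        rw [mem_Ioc] at hg
        tauto
      rw [he, measure_empty]
  -- the Lebesgue integral computation
  have h3 : μ {ω | (c₁ < G ω ∧ G ω ≤ b) ∧ H ω ≥ G ω}
      = ∫⁻ g in Ioc c₁ b, ENNReal.ofReal (gd g) * ENNReal.ofReal (1 - FH g) := by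
    rw [h1, h2, hslice, lintegral_indicator measurableSet_Ioc]
    simp_rw [hμHIci]
    rw [hμGν, hν, restrict_withDensity measurableSet_Ioc,
      lintegral_withDensity_eq_lintegral_mul _ hgdm.ennreal_ofReal
        (show Measurable (fun x => ENNReal.ofReal (1 - FH x)) from
          (continuous_const.sub hFHc).measurable.ennreal_ofReal)]
    rfl
  -- the real integrand
  set w : ℝ → ℝ := fun x => (1 - (1-exp (-(Ωh*x)))^M) * gdr x with hw
  have hwc : Continuous w := by rw [hw]; fun_prop
  have hwpos : ∀ x : ℝ, 0 ≤ x → 0 ≤ w x := by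
    intro x hx
    rw [hw]
    have h1 : exp (-(Ωh*x)) ≤ 1 := by
      rw [exp_le_one_iff]
      have : 0 ≤ Ωh * x := mul_nonneg hΩh.le hx
      linarith
    have h2 : (1-exp (-(Ωh*x)))^M ≤ 1 := by
      apply pow_le_one₀ (by linarith [exp_nonneg (-(Ωh*x))])
        (by linarith [exp_nonneg (-(Ωh*x))])
    exact mul_nonneg (by linarith) (hgdrpos x hx)
  have h4 : ∫⁻ g in Ioc c₁ b, ENNReal.ofReal (gd g) * ENNReal.ofReal (1 - FH g)
      = ENNReal.ofReal (∫ x in c₁..b, w x) := by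
    have hcong : ∀ x ∈ Ioc c₁ b, ENNReal.ofReal (gd x) * ENNReal.ofReal (1 - FH x)
        = ENNReal.ofReal (w x) := by
      intro x hx
      have hx0 : (0:ℝ) ≤ x := le_trans hc₁ (mem_Ioc.1 hx).1.le
      rw [hgd, hFH]
      simp only [if_pos hx0]
      rw [← ENNReal.ofReal_mul (hgdrpos x hx0)]
      congr 1
      rw [hw]; ring
    rw [setLIntegral_congr_fun measurableSet_Ioc hcong]
    rw [← ofReal_integral_eq_lintegral_ofReal (hwc.integrableOn_Ioc)
      ((ae_restrict_iff' measurableSet_Ioc).2 (ae_of_all _ fun x hx =>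
        hwpos x (le_trans hc₁ (mem_Ioc.1 hx).1.le)))]
    rw [intervalIntegral.integral_of_le hbc]
  -- antiderivative
  set Φ : ℝ → ℝ := fun x => ∑ m ∈ Finset.Icc 1 M, ∑ k ∈ Finset.Icc 1 K,
      (-1:ℝ)^(m+k) * (M.choose m) * (K.choose k) *
        ((k:ℝ)*Ωg/((m:ℝ)*Ωh+(k:ℝ)*Ωg)) * (-(exp (-(((m:ℝ)*Ωh+(k:ℝ)*Ωg) * x)))) with hΦ
  have hspos : ∀ m ∈ Finset.Icc 1 M, ∀ k ∈ Finset.Icc 1 K, (0:ℝ) < (m:ℝ)*Ωh+(k:ℝ)*Ωg := by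
    intro m hm k hk
    rw [Finset.mem_Icc] at hm hk
    have h1 : (1:ℝ) ≤ m := by exact_mod_cast hm.1
    have h2 : (1:ℝ) ≤ k := by exact_mod_cast hk.1
    nlinarith
  have hΦderiv : ∀ x : ℝ, HasDerivAt Φ (w x) x := by
    intro x
    have hterm : ∀ m ∈ Finset.Icc 1 M, ∀ k ∈ Finset.Icc 1 K,
        HasDerivAt (fun y => (-1:ℝ)^(m+k) * (M.choose m) * (K.choose k) *
          ((k:ℝ)*Ωg/((m:ℝ)*Ωh+(k:ℝ)*Ωg)) * (-(exp (-(((m:ℝ)*Ωh+(k:ℝ)*Ωg) * y)))))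
          ((-1:ℝ)^(m+k) * (M.choose m) * (K.choose k) *
          ((k:ℝ)*Ωg/((m:ℝ)*Ωh+(k:ℝ)*Ωg)) * (((m:ℝ)*Ωh+(k:ℝ)*Ωg) * exp (-(((m:ℝ)*Ωh+(k:ℝ)*Ωg) * x)))) x := by
      intro m _ k _
      set s : ℝ := (m:ℝ)*Ωh+(k:ℝ)*Ωg with hs
      have h1 : HasDerivAt (fun y:ℝ => -(s*y)) (-s) x := by
        simpa using ((hasDerivAt_id x).const_mul s).fun_neg
      have h2 := (h1.exp).fun_neg
      have h3 := h2.const_mul ((-1:ℝ)^(m+k) * (M.choose m) * (K.choose k) * ((k:ℝ)*Ωg/s))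
      refine h3.congr_deriv ?_
      ring
    have hsum : HasDerivAt Φ (∑ m ∈ Finset.Icc 1 M, ∑ k ∈ Finset.Icc 1 K,
        (-1:ℝ)^(m+k) * (M.choose m) * (K.choose k) *
          ((k:ℝ)*Ωg/((m:ℝ)*Ωh+(k:ℝ)*Ωg)) * (((m:ℝ)*Ωh+(k:ℝ)*Ωg) * exp (-(((m:ℝ)*Ωh+(k:ℝ)*Ωg) * x)))) x := by
      rw [hΦ]
      exact HasDerivAt.fun_sum (fun m hm => HasDerivAt.fun_sum (fun k hk => hterm m hm k hk))
    convert hsum using 1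
    -- algebraic identity
    set u : ℝ := exp (-(Ωh*x)) with hu
    set v : ℝ := exp (-(Ωg*x)) with hv
    have hexp : ∀ m ∈ Finset.Icc 1 M, ∀ k ∈ Finset.Icc 1 K,
        exp (-(((m:ℝ)*Ωh+(k:ℝ)*Ωg) * x)) = u^m * v^k := by
      intro m _ k _
      rw [hu, hv, ← Real.exp_nat_mul, ← Real.exp_nat_mul, ← Real.exp_add]
      congr 1
      ring
    have heq : ∀ m ∈ Finset.Icc 1 M, ∀ k ∈ Finset.Icc 1 K,
        (-1:ℝ)^(m+k) * (M.choose m) * (K.choose k) *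
          ((k:ℝ)*Ωg/((m:ℝ)*Ωh+(k:ℝ)*Ωg)) * (((m:ℝ)*Ωh+(k:ℝ)*Ωg) * exp (-(((m:ℝ)*Ωh+(k:ℝ)*Ωg) * x)))
        = ((-1:ℝ)^m * (M.choose m) * u^m) * (((-1:ℝ)^k * (K.choose k) * k * v^k) * Ωg) := by
      intro m hm k hk
      rw [hexp m hm k hk, pow_add]
      have hs0 : ((m:ℝ)*Ωh+(k:ℝ)*Ωg) ≠ 0 := (hspos m hm k hk).ne'
      field_simp
    rw [Finset.sum_congr rfl (fun m hm => Finset.sum_congr rfl (fun k hk => heq m hm k hk))]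
    rw [← Finset.sum_mul_sum]
    rw [← Finset.sum_mul, binA M hM u, binB K hK v]
    rw [hw, hgdr, hu, hv]
    ring
  have h5 : ∫ x in c₁..b, w x = Φ b - Φ c₁ := by
    rw [intervalIntegral.integral_eq_sub_of_hasDerivAt (fun x _ => hΦderiv x)
      (hwc.intervalIntegrable c₁ b)]
  have h6 : 0 ≤ ∫ x in c₁..b, w x := by
    apply intervalIntegral.integral_nonneg hbc
    intro x hx
    exact hwpos x (le_trans hc₁ hx.1)
  rw [h3, h4, ENNReal.toReal_ofReal h6, h5, hΦ]
  rw [← Finset.sum_sub_distrib]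
  refine Finset.sum_congr rfl fun m hm => ?_
  rw [← Finset.sum_sub_distrib]
  refine Finset.sum_congr rfl fun k hk => ?_
  have hexpb : exp (-(((m:ℝ)*Ωh+(k:ℝ)*Ωg) * b))
      = exp (-(((m:ℝ)*Ωh+(k:ℝ)*Ωg) * c₁)) * exp (-(((m:ℝ)*Ωh+(k:ℝ)*Ωg) * c₂)) := by
    rw [← Real.exp_add]
    congr 1
    rw [hb]; ring
  rw [hexpb]
  ring
end

section
/- If H and G are independent, then for all real 0 ≤ c₁ < c₂, P(c₁ < H < G < c₂) = Σ_{m=1}^{M} Σ_{k=1}^{K} (−1)^{m+k} · C(M, m) · C(K, k) · ( (m·Ω_h·e^{−(m·Ω_h + k·Ω_g)·c₁} + k·Ω_g·e^{−(m·Ω_h + k·Ω_g)·c₂}) / (m·Ω_h + k·Ω_g) − e^{−(m·Ω_h·c₁ + k·Ω_g·c₂)} ), where C(·,·) denotes the binomial coefficient. -/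
open MeasureTheory ProbabilityTheory Real

open Set Filter

open MeasureTheory ProbabilityTheory Real Set Filter

lemma one_sub_pow_sum (u : ℝ) (n : ℕ) :
    (1 - u) ^ n = ∑ m ∈ Finset.range (n+1), (-1:ℝ)^m * (n.choose m) * u^m := by
  have : (1 - u) = (-u) + 1 := by ring
  rw [this, add_pow]
  refine Finset.sum_congr rfl fun m hm => ?_
  rw [neg_pow]
  ring

lemma range_succ_eq_insert (n : ℕ) : Finset.range (n+1) = insert 0 (Finset.Icc 1 n) := by
  ext m; simp [Nat.lt_succ_iff]; omega

-- density function

noncomputable def fdens (a : ℝ) (n : ℕ) (x : ℝ) : ℝ :=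
  ∑ m ∈ Finset.Icc 1 n, (-1:ℝ)^(m+1) * (n.choose m) * ((m:ℝ)*a) * exp (-((m:ℝ)*a*x))

lemma P_eq_sum (a x : ℝ) (n : ℕ) :
    (1 - exp (-(a*x))) ^ n
      = ∑ m ∈ Finset.range (n+1), (-1:ℝ)^m * (n.choose m) * exp (-((m:ℝ)*a*x)) := by
  rw [one_sub_pow_sum]
  refine Finset.sum_congr rfl fun m hm => ?_
  rw [← Real.exp_nat_mul]
  ring_nf

lemma hasDerivAt_P (a : ℝ) (n : ℕ) (x : ℝ) :
    HasDerivAt (fun y => (1 - exp (-(a*y))) ^ n) (fdens a n x) x := by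
  have h1 : ∀ y:ℝ, (1 - exp (-(a*y))) ^ n
      = ∑ m ∈ Finset.range (n+1), (-1:ℝ)^m * (n.choose m) * exp (-((m:ℝ)*a*y)) :=
    fun y => P_eq_sum a y n
  simp only [h1]
  have h2 : HasDerivAt (fun y => ∑ m ∈ Finset.range (n+1), (-1:ℝ)^m * (n.choose m) * exp (-((m:ℝ)*a*y)))
      (∑ m ∈ Finset.range (n+1), (-1:ℝ)^m * (n.choose m) * (exp (-((m:ℝ)*a*x)) * (-((m:ℝ)*a)))) x := by
    apply HasDerivAt.fun_sum
    intro m hm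
    have : HasDerivAt (fun y => exp (-((m:ℝ)*a*y))) (exp (-((m:ℝ)*a*x)) * (-((m:ℝ)*a))) x := by
      have hl : HasDerivAt (fun y:ℝ => -((m:ℝ)*a*y)) (-((m:ℝ)*a)) x := by
        simpa using ((hasDerivAt_id x).const_mul ((m:ℝ)*a)).fun_neg
      exact (Real.hasDerivAt_exp _).comp x hl
    exact this.const_mul _
  convert h2 using 1
  rw [fdens, range_succ_eq_insert, Finset.sum_insert (by simp)]
  simp only [Nat.cast_zero]
  rw [show ((0:ℝ) * a * x) = 0 by ring]
  simp only [neg_zero, Real.exp_zero]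
  rw [show ((-1:ℝ))^0 * ((n.choose 0):ℝ) * (1 * -(0*a)) = 0 by simp]
  rw [zero_add]
  refine Finset.sum_congr rfl fun m hm => ?_
  rw [pow_succ]
  ring

lemma fdens_eq_prod (a x : ℝ) (n : ℕ) (hn : 0 < n) :
    fdens a n x = n * a * exp (-(a*x)) * (1 - exp (-(a*x))) ^ (n-1) := by
  obtain ⟨N, rfl⟩ := Nat.exists_eq_succ_of_ne_zero hn.ne'
  simp only [Nat.succ_eq_add_one, Nat.add_sub_cancel]
  rw [fdens, show Finset.Icc 1 (N+1) = Finset.Ico 1 (N+2) by rw [← Finset.Ico_add_one_right_eq_Icc]; rfl,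
    Finset.sum_Ico_eq_sum_range]
  simp only [show N + 2 - 1 = N + 1 from rfl]
  rw [one_sub_pow_sum, Finset.mul_sum]
  refine Finset.sum_congr rfl fun j hj => ?_
  have h3 : (N+1).choose (1+j) * (1+j) = (N+1) * N.choose j := by
    rw [Nat.add_comm 1 j]
    simpa [Nat.succ_eq_add_one, Nat.mul_comm] using (Nat.add_one_mul_choose_eq N j).symm
  have hc : ((N+1).choose (1+j) : ℝ) * (1+(j:ℝ)) = ((N:ℝ)+1) * (N.choose j) := by
    exact_mod_cast h3
  have hu : exp (-(a*x)) ^ j = exp ((j:ℝ) * -(a*x)) := (Real.exp_nat_mul _ j).symm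
  rw [show (-1:ℝ)^(1+j+1) = (-1)^j by rw [show 1+j+1 = j+2 by ring, pow_add]; simp]
  push_cast
  rw [show (-((1+(j:ℝ))*a*x)) = -(a*x) + ((j:ℝ) * -(a*x)) by ring, Real.exp_add, ← hu]
  linear_combination ((-1:ℝ)^j * a * (exp (-(a*x)) * exp (-(a*x))^j)) * hc

lemma fdens_cont (a : ℝ) (n : ℕ) : Continuous (fdens a n) := by
  unfold fdens
  fun_prop

lemma fdens_nonneg {a : ℝ} (ha : 0 < a) {n : ℕ} (hn : 0 < n) {x : ℝ} (hx : 0 ≤ x) :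
    0 ≤ fdens a n x := by
  rw [fdens_eq_prod a x n hn]
  have h1 : exp (-(a*x)) ≤ 1 := by
    rw [← Real.exp_zero]
    exact exp_le_exp.2 (by nlinarith)
  have h2 : (0:ℝ) ≤ 1 - exp (-(a*x)) := by linarith
  have h3 : (0:ℝ) ≤ (n:ℝ) * a := by positivity
  exact mul_nonneg (mul_nonneg h3 (exp_nonneg _)) (pow_nonneg h2 _)

lemma one_sub_exp_mem {a x : ℝ} (ha : 0 < a) (hx : 0 ≤ x) : 0 ≤ 1 - exp (-(a*x)) := by
  have : exp (-(a*x)) ≤ 1 := by rw [← Real.exp_zero]; exact exp_le_exp.2 (by nlinarith)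
  linarith

lemma P_mono {a : ℝ} (ha : 0 < a) (n : ℕ) {x y : ℝ} (hx : 0 ≤ x) (hxy : x ≤ y) :
    (1 - exp (-(a*x)))^n ≤ (1 - exp (-(a*y)))^n := by
  apply pow_le_pow_left₀ (one_sub_exp_mem ha hx)
  have : exp (-(a*y)) ≤ exp (-(a*x)) := exp_le_exp.2 (by nlinarith)
  linarith

noncomputable def dens (a : ℝ) (n : ℕ) : ℝ → ENNReal :=
  fun x => ENNReal.ofReal ((Set.Ici (0:ℝ)).indicator (fdens a n) x)

lemma dens_meas (a : ℝ) (n : ℕ) : Measurable (dens a n) :=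
  ENNReal.measurable_ofReal.comp ((fdens_cont a n).measurable.indicator measurableSet_Ici)

lemma dens_cdf {a : ℝ} (ha : 0 < a) {n : ℕ} (hn : 0 < n) (x : ℝ) :
    (volume.withDensity (dens a n)) (Iic x)
      = ENNReal.ofReal (if 0 ≤ x then (1 - exp (-(a*x)))^n else 0) := by
  rw [withDensity_apply _ measurableSet_Iic]
  by_cases hx : 0 ≤ x
  · rw [if_pos hx]
    have hsplit : Iic x = Iio 0 ∪ Icc 0 x := by
      ext t; simp only [mem_Iic, mem_union, mem_Iio, mem_Icc]; constructor
      · intro h; by_cases h0 : t < 0; · left; exact h0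
        · right; exact ⟨le_of_not_gt h0, h⟩
      · rintro (h | ⟨h1, h2⟩); · linarith
        · exact h2
    rw [hsplit, lintegral_union measurableSet_Icc (by
      rw [Set.disjoint_left]; intro t ht1 ht2; exact absurd ht2.1 (not_le.2 ht1))]
    have hz : ∫⁻ t in Iio 0, dens a n t = 0 := by
      rw [setLIntegral_congr_fun measurableSet_Iio
        (fun t ht => ?_), lintegral_zero]
      simp [dens, Set.indicator_apply, (mem_Iio.1 ht).not_ge]
    rw [hz, zero_add]
    have heq : ∫⁻ t in Icc 0 x, dens a n t = ∫⁻ t in Icc 0 x, ENNReal.ofReal (fdens a n t) := by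
      refine setLIntegral_congr_fun measurableSet_Icc
        (fun t ht => ?_)
      simp [dens, Set.indicator_of_mem (show t ∈ Ici (0:ℝ) from ht.1)]
    rw [heq, ← ofReal_integral_eq_lintegral_ofReal
      ((fdens_cont a n).integrableOn_Icc) (by
        filter_upwards [ae_restrict_mem measurableSet_Icc] with t ht
        exact fdens_nonneg ha hn ht.1)]
    congr 1
    rw [MeasureTheory.integral_Icc_eq_integral_Ioc, ← intervalIntegral.integral_of_le hx,
      intervalIntegral.integral_eq_sub_of_hasDerivAt
        (fun t _ => hasDerivAt_P a n t) ((fdens_cont a n).intervalIntegrable 0 x)]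
    simp [Real.exp_zero, zero_pow hn.ne']
  · rw [if_neg hx]
    rw [setLIntegral_congr_fun measurableSet_Iic
      (fun t ht => ?_), lintegral_zero]
    · simp
    · have : t < 0 := lt_of_le_of_lt ht (not_le.1 hx)
      simp [dens, Set.indicator_apply, this.not_ge]

lemma dens_prob {a : ℝ} (ha : 0 < a) {n : ℕ} (hn : 0 < n) :
    IsProbabilityMeasure (volume.withDensity (dens a n)) := by
  constructor
  have h1 := tendsto_measure_Iic_atTop (volume.withDensity (dens a n))
  have h2 : Tendsto (fun x:ℝ => (volume.withDensity (dens a n)) (Iic x)) atTop (nhds 1) := by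
    have hexp : Tendsto (fun x:ℝ => (1 - exp (-(a*x)))^n) atTop (nhds 1) := by
      have hax : Tendsto (fun x:ℝ => -(a*x)) atTop atBot := by
        have := Filter.Tendsto.const_mul_atTop ha (tendsto_id (α := ℝ))
        have h2 := tendsto_neg_atTop_atBot.comp this
        exact h2.congr fun x => by simp
      have := ((Real.tendsto_exp_atBot.comp hax).const_sub 1).pow n
      simpa using this
    have : Tendsto (fun x:ℝ => ENNReal.ofReal (if 0 ≤ x then (1 - exp (-(a*x)))^n else 0))
        atTop (nhds 1) := by
      have hif : Tendsto (fun x:ℝ => if 0 ≤ x then (1 - exp (-(a*x)))^n else 0) atTop (nhds 1) := by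
        refine hexp.congr' ?_
        filter_upwards [eventually_ge_atTop (0:ℝ)] with x hx
        rw [if_pos hx]
      simpa [Function.comp_def] using (ENNReal.continuous_ofReal.tendsto 1).comp hif
    exact this.congr fun x => (dens_cdf ha hn x).symm
  exact tendsto_nhds_unique h1 h2

lemma map_eq {Ω : Type*} [MeasurableSpace Ω] (μ : Measure Ω) [IsProbabilityMeasure μ]
    {X : Ω → ℝ} (hXm : Measurable X) {a : ℝ} (ha : 0 < a) {n : ℕ} (hn : 0 < n)
    (hcdf : ∀ x : ℝ, 0 ≤ x → (μ {ω | X ω ≤ x}).toReal = (1 - exp (-(a*x)))^n)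
    (hneg : ∀ x : ℝ, x < 0 → μ {ω | X ω ≤ x} = 0) :
    μ.map X = volume.withDensity (dens a n) := by
  haveI := Measure.isProbabilityMeasure_map hXm.aemeasurable (μ := μ)
  refine Measure.ext_of_Iic _ _ fun x => ?_
  rw [Measure.map_apply hXm measurableSet_Iic, dens_cdf ha hn]
  have hpre : X ⁻¹' Iic x = {ω | X ω ≤ x} := rfl
  by_cases hx : 0 ≤ x
  · rw [if_pos hx, hpre, ← hcdf x hx, ENNReal.ofReal_toReal (measure_ne_top μ _)]
  · rw [if_neg hx]; simp [hpre, hneg x (not_le.1 hx)]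

lemma prod_measure_eq {Ωh Ωg : ℝ} (hΩh : 0 < Ωh) (hΩg : 0 < Ωg) {M K : ℕ}
    (hM : 0 < M) (hK : 0 < K) {c₁ c₂ : ℝ} (h1 : 0 ≤ c₁) (h12 : c₁ < c₂) :
    ((volume.withDensity (dens Ωh M)).prod (volume.withDensity (dens Ωg K)))
        {p : ℝ × ℝ | c₁ < p.1 ∧ p.1 < p.2 ∧ p.2 < c₂}
      = ENNReal.ofReal (∫ h in c₁..c₂,
          fdens Ωh M h * ((1 - exp (-(Ωg*c₂)))^K - (1 - exp (-(Ωg*h)))^K)) := by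
  set νG := volume.withDensity (dens Ωg K) with hνG
  have hS : MeasurableSet {p : ℝ × ℝ | c₁ < p.1 ∧ p.1 < p.2 ∧ p.2 < c₂} := by
    apply MeasurableSet.inter
    · exact measurableSet_lt measurable_const measurable_fst
    · exact (measurableSet_lt measurable_fst measurable_snd).inter
        (measurableSet_lt measurable_snd measurable_const)
  rw [Measure.prod_apply hS,
    lintegral_withDensity_eq_lintegral_mul volume (dens_meas Ωh M)
      (measurable_measure_prodMk_left hS)]
  have hsingle : νG {c₂} = 0 :=
    (withDensity_absolutelyContinuous volume (dens Ωg K)) (volume_singleton)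
  have hkey : ∀ h : ℝ, (dens Ωh M * fun h => νG (Prod.mk h ⁻¹' {p : ℝ × ℝ | c₁ < p.1 ∧ p.1 < p.2 ∧ p.2 < c₂})) h
      = (Ioo c₁ c₂).indicator (fun h => ENNReal.ofReal
          (fdens Ωh M h * ((1 - exp (-(Ωg*c₂)))^K - (1 - exp (-(Ωg*h)))^K))) h := by
    intro h
    simp only [Pi.mul_apply]
    by_cases hmem : h ∈ Ioo c₁ c₂
    · rw [Set.indicator_of_mem hmem]
      have hpre : (Prod.mk h ⁻¹' {p : ℝ × ℝ | c₁ < p.1 ∧ p.1 < p.2 ∧ p.2 < c₂}) = Ioo h c₂ := by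
        ext g; simp [Set.mem_Ioo, hmem.1, and_assoc]
      have h0 : (0:ℝ) ≤ h := le_trans h1 hmem.1.le
      have hIoo : νG (Ioo h c₂) = ENNReal.ofReal
          ((1 - exp (-(Ωg*c₂)))^K - (1 - exp (-(Ωg*h)))^K) := by
        have hioc : νG (Ioo h c₂) = νG (Ioc h c₂) :=
          measure_congr (Ioo_ae_eq_Ioc' hsingle)
        have hdiff : Ioc h c₂ = Iic c₂ \ Iic h := by
          ext g; simp [Set.mem_Ioc, Set.mem_diff]
        rw [hioc, hdiff, measure_diff (Iic_subset_Iic.2 hmem.2.le)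
          measurableSet_Iic.nullMeasurableSet, dens_cdf hΩg hK, dens_cdf hΩg hK,
          if_pos (le_trans h0 hmem.2.le), if_pos h0,
          ← ENNReal.ofReal_sub _ (pow_nonneg (one_sub_exp_mem hΩg h0) K)]
        · rw [dens_cdf hΩg hK, if_pos h0]
          exact ENNReal.ofReal_ne_top
      rw [hpre, hIoo]
      have : dens Ωh M h = ENNReal.ofReal (fdens Ωh M h) := by
        rw [dens, Set.indicator_of_mem (mem_Ici.2 h0)]
      rw [this, ← ENNReal.ofReal_mul (fdens_nonneg hΩh hM h0)]
    · rw [Set.indicator_of_notMem hmem]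
      have : (Prod.mk h ⁻¹' {p : ℝ × ℝ | c₁ < p.1 ∧ p.1 < p.2 ∧ p.2 < c₂}) = ∅ := by
        rw [Set.mem_Ioo, not_and_or] at hmem
        ext g
        simp only [Set.mem_preimage, Set.mem_setOf_eq, Set.mem_empty_iff_false, iff_false]
        rintro ⟨hg1, hg2, hg3⟩
        rcases hmem with hc | hc
        · exact hc hg1
        · exact hc (lt_trans hg2 hg3)
      rw [this]
      simp
  rw [lintegral_congr hkey, lintegral_indicator measurableSet_Ioo]
  have hint : IntegrableOn (fun h => fdens Ωh M h *
      ((1 - exp (-(Ωg*c₂)))^K - (1 - exp (-(Ωg*h)))^K)) (Ioo c₁ c₂) volume := by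
    have hc : Continuous fun h:ℝ => fdens Ωh M h *
        ((1 - exp (-(Ωg*c₂)))^K - (1 - exp (-(Ωg*h)))^K) := by
      have h1 := fdens_cont Ωh M
      fun_prop
    exact hc.integrableOn_Icc.mono_set Set.Ioo_subset_Icc_self
  rw [← ofReal_integral_eq_lintegral_ofReal hint ?_]
  · congr 1
    rw [← MeasureTheory.integral_Ioc_eq_integral_Ioo, ← intervalIntegral.integral_of_le h12.le]
  · filter_upwards [ae_restrict_mem measurableSet_Ioo] with t ht
    have h0 : (0:ℝ) ≤ t := le_trans h1 ht.1.le
    have := P_mono hΩg K h0 ht.2.le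
    exact mul_nonneg (fdens_nonneg hΩh hM h0) (by linarith)

noncomputable def coef (Ωh Ωg : ℝ) (M K : ℕ) (m k : ℕ) : ℝ :=
  (-1:ℝ)^(m+1) * (M.choose m) * ((m:ℝ)*Ωh) * ((-1:ℝ)^k * (K.choose k))

noncomputable def sVal (Ωh Ωg : ℝ) (m k : ℕ) : ℝ := (m:ℝ)*Ωh + (k:ℝ)*Ωg

noncomputable def Phi (Ωh Ωg : ℝ) (M K : ℕ) (c₂ : ℝ) (h : ℝ) : ℝ :=
  (1 - exp (-(Ωh*h)))^M * (1 - exp (-(Ωg*c₂)))^K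
    - ∑ m ∈ Finset.Icc 1 M, ∑ k ∈ Finset.range (K+1),
        coef Ωh Ωg M K m k * (-(exp (-(sVal Ωh Ωg m k * h)) / sVal Ωh Ωg m k))

lemma hasDerivAt_Phi {Ωh Ωg : ℝ} (hΩh : 0 < Ωh) (hΩg : 0 < Ωg) {M K : ℕ}
    (c₂ : ℝ) (x : ℝ) :
    HasDerivAt (Phi Ωh Ωg M K c₂)
      (fdens Ωh M x * ((1 - exp (-(Ωg*c₂)))^K - (1 - exp (-(Ωg*x)))^K)) x := by
  have hA : HasDerivAt (fun h => (1 - exp (-(Ωh*h)))^M * (1 - exp (-(Ωg*c₂)))^K)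
      (fdens Ωh M x * (1 - exp (-(Ωg*c₂)))^K) x :=
    (hasDerivAt_P Ωh M x).mul_const _
  have hB : HasDerivAt (fun h => ∑ m ∈ Finset.Icc 1 M, ∑ k ∈ Finset.range (K+1),
        coef Ωh Ωg M K m k * (-(exp (-(sVal Ωh Ωg m k * h)) / sVal Ωh Ωg m k)))
      (fdens Ωh M x * (1 - exp (-(Ωg*x)))^K) x := by
    have hterm : ∀ m ∈ Finset.Icc 1 M, ∀ k ∈ Finset.range (K+1),
        HasDerivAt (fun h => coef Ωh Ωg M K m k * (-(exp (-(sVal Ωh Ωg m k * h)) / sVal Ωh Ωg m k)))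
          (coef Ωh Ωg M K m k * exp (-(sVal Ωh Ωg m k * x))) x := by
      intro m hm k hk
      have hm1 : 1 ≤ m := (Finset.mem_Icc.1 hm).1
      have hs : 0 < sVal Ωh Ωg m k := by
        have : (1:ℝ) ≤ (m:ℝ) := by exact_mod_cast hm1
        have : (0:ℝ) ≤ (k:ℝ) := by positivity
        unfold sVal
        nlinarith [hΩh, hΩg, (show (1:ℝ) ≤ (m:ℝ) by exact_mod_cast hm1)]
      set s := sVal Ωh Ωg m k
      have h1 : HasDerivAt (fun h:ℝ => exp (-(s*h))) (exp (-(s*x)) * (-s)) x := by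
        have hl : HasDerivAt (fun h:ℝ => -(s*h)) (-s) x := by
          simpa using ((hasDerivAt_id x).const_mul s).fun_neg
        exact (Real.hasDerivAt_exp _).comp x hl
      have h2 := ((h1.div_const s).fun_neg).const_mul (coef Ωh Ωg M K m k)
      refine h2.congr_deriv ?_
      field_simp
    have hsum : HasDerivAt (fun h => ∑ m ∈ Finset.Icc 1 M, ∑ k ∈ Finset.range (K+1),
        coef Ωh Ωg M K m k * (-(exp (-(sVal Ωh Ωg m k * h)) / sVal Ωh Ωg m k)))
      (∑ m ∈ Finset.Icc 1 M, ∑ k ∈ Finset.range (K+1),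
        coef Ωh Ωg M K m k * exp (-(sVal Ωh Ωg m k * x))) x := by
      apply HasDerivAt.fun_sum
      intro m hm
      exact HasDerivAt.fun_sum fun k hk => hterm m hm k hk
    convert hsum using 1
    rw [fdens, P_eq_sum, Finset.sum_mul_sum]
    refine Finset.sum_congr rfl fun m hm => Finset.sum_congr rfl fun k hk => ?_
    rw [coef, sVal, show (-(((m:ℝ)*Ωh + (k:ℝ)*Ωg) * x)) = -((m:ℝ)*Ωh*x) + -((k:ℝ)*Ωg*x) by ring,
      Real.exp_add]
    ring
  have := hA.fun_sub hB
  refine this.congr_deriv ?_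
  ring

lemma phi_diff {Ωh Ωg : ℝ} (hΩh : 0 < Ωh) (hΩg : 0 < Ωg) {M K : ℕ}
    (hM : 0 < M) (hK : 0 < K) (c₁ c₂ : ℝ) :
    Phi Ωh Ωg M K c₂ c₂ - Phi Ωh Ωg M K c₂ c₁
      = ∑ m ∈ Finset.Icc 1 M, ∑ k ∈ Finset.Icc 1 K,
          (-1 : ℝ) ^ (m + k) * (M.choose m) * (K.choose k) *
            (((m : ℝ) * Ωh * exp (-(((m : ℝ) * Ωh + (k : ℝ) * Ωg) * c₁)) +
                (k : ℝ) * Ωg * exp (-(((m : ℝ) * Ωh + (k : ℝ) * Ωg) * c₂))) /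
              ((m : ℝ) * Ωh + (k : ℝ) * Ωg) -
              exp (-((m : ℝ) * Ωh * c₁ + (k : ℝ) * Ωg * c₂))) := by
  have hs : ∀ m k : ℕ, 1 ≤ m → 0 < sVal Ωh Ωg m k := by
    intro m k hm
    have h1 : (1:ℝ) ≤ (m:ℝ) := by exact_mod_cast hm
    have h2 : (0:ℝ) ≤ (k:ℝ) := Nat.cast_nonneg k
    unfold sVal; nlinarith
  -- step 1: difference of PH values as sum over Icc 1 M
  have e1 : (1 - exp (-(Ωh*c₂)))^M - (1 - exp (-(Ωh*c₁)))^M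
      = ∑ m ∈ Finset.Icc 1 M,
          (-1:ℝ)^m * (M.choose m) * (exp (-((m:ℝ)*Ωh*c₂)) - exp (-((m:ℝ)*Ωh*c₁))) := by
    rw [P_eq_sum, P_eq_sum, ← Finset.sum_sub_distrib, range_succ_eq_insert,
      Finset.sum_insert (by simp)]
    simp only [Nat.cast_zero, zero_mul, neg_zero, Real.exp_zero]
    rw [show ((-1:ℝ))^0 * ((M.choose 0):ℝ) * 1 - (-1:ℝ)^0 * ((M.choose 0):ℝ) * 1 = 0 by ring,
      zero_add]
    exact Finset.sum_congr rfl fun m hm => by ring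
  -- main rearrangement
  rw [Phi, Phi]
  rw [show ∀ A B C D : ℝ, (A - B) - (C - D) = (A - C) - (B - D) from fun A B C D => by ring]
  rw [← sub_mul, e1, ← Finset.sum_sub_distrib]
  -- write (1 - exp (-(Ωg*c₂)))^K as a sum and distribute
  rw [P_eq_sum Ωg c₂ K]
  rw [Finset.sum_mul, ← Finset.sum_sub_distrib]
  refine Finset.sum_congr rfl fun m hm => ?_
  have hm1 : 1 ≤ m := (Finset.mem_Icc.1 hm).1
  rw [Finset.mul_sum, ← Finset.sum_sub_distrib]
  -- both sides sums over range (K+1) vs Icc 1 K; split off k = 0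
  rw [range_succ_eq_insert, Finset.sum_insert (by simp), Finset.sum_insert (by simp),
    show ∀ a b c d : ℝ, (a + b) - (c + d) = (a - c) + (b - d) from fun a b c d => by ring,
    ← Finset.sum_sub_distrib]
  have hz : ((-1:ℝ)^m * (M.choose m) * (exp (-((m:ℝ)*Ωh*c₂)) - exp (-((m:ℝ)*Ωh*c₁))))
        * ((-1:ℝ)^0 * ((K.choose 0):ℝ) * exp (-(((0:ℕ):ℝ)*Ωg*c₂)))
      - (coef Ωh Ωg M K m 0 * -(exp (-(sVal Ωh Ωg m 0 * c₂)) / sVal Ωh Ωg m 0)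
          - coef Ωh Ωg M K m 0 * -(exp (-(sVal Ωh Ωg m 0 * c₁)) / sVal Ωh Ωg m 0)) = 0 := by
    have hsm : sVal Ωh Ωg m 0 = (m:ℝ)*Ωh := by simp [sVal]
    have hmne : ((m:ℝ)*Ωh) ≠ 0 := by
      have : (1:ℝ) ≤ (m:ℝ) := by exact_mod_cast hm1
      positivity
    rw [coef, hsm]
    simp only [Nat.cast_zero, zero_mul, neg_zero, Real.exp_zero, Nat.choose_zero_right,
      Nat.cast_one, pow_zero]
    field_simp
    ring
  rw [hz, zero_add]
  refine Finset.sum_congr rfl fun k hk => ?_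
  have hk1 : 1 ≤ k := (Finset.mem_Icc.1 hk).1
  have hsv := hs m k hm1
  have hsne : sVal Ωh Ωg m k ≠ 0 := (hs m k hm1).ne'
  rw [coef, sVal] at *
  have hsplit2 : exp (-(((m:ℝ)*Ωh + (k:ℝ)*Ωg) * c₂)) = exp (-((m:ℝ)*Ωh*c₂)) * exp (-((k:ℝ)*Ωg*c₂)) := by
    rw [← Real.exp_add]; ring_nf
  have hsplit1 : exp (-((m:ℝ)*Ωh*c₁ + (k:ℝ)*Ωg*c₂)) = exp (-((m:ℝ)*Ωh*c₁)) * exp (-((k:ℝ)*Ωg*c₂)) := by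
    rw [← Real.exp_add]; ring_nf
  have hsgn : (-1:ℝ)^(m+k) = (-1:ℝ)^m * (-1:ℝ)^k := by rw [pow_add]
  have hsgn2 : (-1:ℝ)^(m+1) = -(-1:ℝ)^m := by rw [pow_succ]; ring
  rw [hsgn, hsgn2, hsplit1, hsplit2]
  field_simp
  ring


/-- If `H` and `G` are independent with CDFs `(1 - e^{-Ωh x})^M` and
`(1 - e^{-Ωg x})^K` for `x ≥ 0` (and `0` for `x < 0`), then for `0 ≤ c₁ < c₂`,
`P(c₁ < H < G < c₂)
  = Σ_{m=1}^{M} Σ_{k=1}^{K} (-1)^{m+k}·C(M,m)·C(K,k)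
      · ((m·Ωh·e^{-(m·Ωh+k·Ωg)·c₁} + k·Ωg·e^{-(m·Ωh+k·Ωg)·c₂})/(m·Ωh+k·Ωg)
          - e^{-(m·Ωh·c₁ + k·Ωg·c₂)})`. -/
theorem stmt9 {Ω : Type*} [MeasurableSpace Ω] (μ : Measure Ω) [IsProbabilityMeasure μ]
    (H G : Ω → ℝ) (hHm : Measurable H) (hGm : Measurable G)
    (M K : ℕ) (hM : 0 < M) (hK : 0 < K)
    (Ωh Ωg : ℝ) (hΩh : 0 < Ωh) (hΩg : 0 < Ωg)
    (hind : IndepFun H G μ)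
    (hHcdf : ∀ x : ℝ, 0 ≤ x → (μ {ω | H ω ≤ x}).toReal = (1 - exp (-(Ωh * x))) ^ M)
    (hHneg : ∀ x : ℝ, x < 0 → μ {ω | H ω ≤ x} = 0)
    (hGcdf : ∀ x : ℝ, 0 ≤ x → (μ {ω | G ω ≤ x}).toReal = (1 - exp (-(Ωg * x))) ^ K)
    (hGneg : ∀ x : ℝ, x < 0 → μ {ω | G ω ≤ x} = 0) :
    ∀ c₁ c₂ : ℝ, 0 ≤ c₁ → c₁ < c₂ →
      (μ {ω | c₁ < H ω ∧ H ω < G ω ∧ G ω < c₂}).toReal =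
        ∑ m ∈ Finset.Icc 1 M, ∑ k ∈ Finset.Icc 1 K,
          (-1 : ℝ) ^ (m + k) * (M.choose m) * (K.choose k) *
            (((m : ℝ) * Ωh * exp (-(((m : ℝ) * Ωh + (k : ℝ) * Ωg) * c₁)) +
                (k : ℝ) * Ωg * exp (-(((m : ℝ) * Ωh + (k : ℝ) * Ωg) * c₂))) /
              ((m : ℝ) * Ωh + (k : ℝ) * Ωg) -
              exp (-((m : ℝ) * Ωh * c₁ + (k : ℝ) * Ωg * c₂))) := by
  intro c₁ c₂ h1 h12
  have hS : MeasurableSet {p : ℝ × ℝ | c₁ < p.1 ∧ p.1 < p.2 ∧ p.2 < c₂} := by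
    apply MeasurableSet.inter
    · exact measurableSet_lt measurable_const measurable_fst
    · exact (measurableSet_lt measurable_fst measurable_snd).inter
        (measurableSet_lt measurable_snd measurable_const)
  have hmapH : μ.map H = volume.withDensity (dens Ωh M) :=
    map_eq μ hHm hΩh hM hHcdf hHneg
  have hmapG : μ.map G = volume.withDensity (dens Ωg K) :=
    map_eq μ hGm hΩg hK hGcdf hGneg
  have hpair : μ.map (fun ω => (H ω, G ω)) = (μ.map H).prod (μ.map G) :=
    (indepFun_iff_map_prod_eq_prod_map_map hHm.aemeasurable hGm.aemeasurable).1 hind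
  have hev : {ω | c₁ < H ω ∧ H ω < G ω ∧ G ω < c₂}
      = (fun ω => (H ω, G ω)) ⁻¹' {p : ℝ × ℝ | c₁ < p.1 ∧ p.1 < p.2 ∧ p.2 < c₂} := rfl
  rw [hev, ← Measure.map_apply (hHm.prodMk hGm) hS, hpair, hmapH, hmapG,
    prod_measure_eq hΩh hΩg hM hK h1 h12]
  have hI : (∫ h in c₁..c₂,
        fdens Ωh M h * ((1 - exp (-(Ωg*c₂)))^K - (1 - exp (-(Ωg*h)))^K))
      = Phi Ωh Ωg M K c₂ c₂ - Phi Ωh Ωg M K c₂ c₁ := by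
    apply intervalIntegral.integral_eq_sub_of_hasDerivAt
      (fun x _ => hasDerivAt_Phi hΩh hΩg c₂ x)
    apply Continuous.intervalIntegrable
    have := fdens_cont Ωh M
    fun_prop
  rw [hI, phi_diff hΩh hΩg hM hK c₁ c₂, ENNReal.toReal_ofReal]
  rw [← phi_diff hΩh hΩg hM hK c₁ c₂, ← hI]
  apply intervalIntegral.integral_nonneg h12.le
  intro u hu
  have h0 : (0:ℝ) ≤ u := le_trans h1 hu.1
  have := P_mono hΩg K h0 hu.2
  exact mul_nonneg (fdens_nonneg hΩh hM h0) (by linarith)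
end

section
/- Let M, K be positive integers, Ω_h, Ω_g > 0, γ > 0, and define F(ρ) = 1 − (1 − (1 − e^{−Ω_h·γ/ρ})^M)·(1 − (1 − e^{−Ω_g·γ/ρ})^K) for ρ > 0. Then ρ^{min(M,K)}·F(ρ) tends, as ρ → ∞, to (Ω_h·γ)^M if M < K, to (Ω_g·γ)^K if K < M, and to (Ω_h·γ)^M + (Ω_g·γ)^M if M = K. Consequently, the per-antenna outage probability of the subset-based joint antenna selection decays like ρ^{−min(M,K)}, yielding diversity order N·min(M, K) for N independent base-station antennas. -/
open Real Filter

lemma lim_mul_one_sub_exp (c : ℝ) (hc : 0 < c) :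
    Tendsto (fun ρ : ℝ => ρ * (1 - exp (-(c / ρ)))) atTop (nhds c) := by
  have hd : HasDerivAt (fun x : ℝ => 1 - exp (-x)) 1 0 := by
    have h1 : HasDerivAt (fun x : ℝ => -x) (-1) 0 := (hasDerivAt_id 0).neg
    have h2 := (Real.hasDerivAt_exp (-0)).comp 0 h1
    have h3 := h2.const_sub 1
    norm_num at h3
    exact h3
  have hslope : Tendsto (fun x : ℝ => (1 - exp (-x)) / x) (nhdsWithin 0 {0}ᶜ) (nhds 1) := by
    have := hasDerivAt_iff_tendsto_slope.mp hd
    simpa [slope_fun_def, Function.comp, div_eq_inv_mul] using this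
  have h0 : Tendsto (fun ρ : ℝ => c / ρ) atTop (nhds 0) :=
    tendsto_const_nhds.div_atTop tendsto_id
  have h1 : Tendsto (fun ρ : ℝ => c / ρ) atTop (nhdsWithin 0 {0}ᶜ) := by
    refine tendsto_nhdsWithin_of_tendsto_nhds_of_eventually_within _ h0 ?_
    filter_upwards [eventually_gt_atTop (0:ℝ)] with ρ hρ
    exact div_ne_zero hc.ne' hρ.ne'
  have h2 : Tendsto (fun ρ : ℝ => c * ((1 - exp (-(c / ρ))) / (c / ρ))) atTop (nhds (c * 1)) :=
    (hslope.comp h1).const_mul c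
  rw [mul_one] at h2
  refine h2.congr' ?_
  filter_upwards [eventually_gt_atTop (0:ℝ)] with ρ hρ
  field_simp


/-- For positive integers `M, K`, rates `Ωh, Ωg > 0`, threshold
`γ > 0`, and `F ρ = 1 - (1 - (1 - e^{-Ωh·γ/ρ})^M)·(1 - (1 - e^{-Ωg·γ/ρ})^K)`,
the quantity `ρ^{min(M,K)}·F ρ` tends, as `ρ → ∞`, to `(Ωh·γ)^M` if `M < K`,
to `(Ωg·γ)^K` if `K < M`, and to `(Ωh·γ)^M + (Ωg·γ)^M` if `M = K`: the
per-antenna outage probability of the subset-based joint antenna selection decays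
like `ρ^{-min(M,K)}`, i.e. diversity order `N·min(M,K)` for `N` antennas. -/
theorem stmt11 (M K : ℕ) (hM : 0 < M) (hK : 0 < K)
    (Ωh Ωg : ℝ) (hΩh : 0 < Ωh) (hΩg : 0 < Ωg) (γ : ℝ) (hγ : 0 < γ)
    (F : ℝ → ℝ)
    (hF : ∀ ρ : ℝ, 0 < ρ →
      F ρ = 1 - (1 - (1 - exp (-(Ωh * γ / ρ))) ^ M) *
              (1 - (1 - exp (-(Ωg * γ / ρ))) ^ K)) :
    Tendsto (fun ρ : ℝ => ρ ^ (min M K) * F ρ) atTop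
      (nhds (if M < K then (Ωh * γ) ^ M
             else if K < M then (Ωg * γ) ^ K
             else (Ωh * γ) ^ M + (Ωg * γ) ^ M)) := by
  set a := Ωh * γ with ha
  set b := Ωg * γ with hb
  have hca : 0 < a := mul_pos hΩh hγ
  have hcb : 0 < b := mul_pos hΩg hγ
  set m := min M K with hm
  obtain ⟨p, hp⟩ : ∃ p, M = m + p := ⟨M - m, by omega⟩
  obtain ⟨q, hq⟩ : ∃ q, K = m + q := ⟨K - m, by omega⟩
  have hA := (lim_mul_one_sub_exp a hca).pow M
  have hB := (lim_mul_one_sub_exp b hcb).pow K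
  have hinv : Tendsto (fun ρ : ℝ => ρ⁻¹) atTop (nhds 0) := tendsto_inv_atTop_zero
  have key : Tendsto (fun ρ : ℝ =>
      (ρ * (1 - exp (-(a/ρ))))^M * (ρ⁻¹)^p
      + (ρ * (1 - exp (-(b/ρ))))^K * (ρ⁻¹)^q
      - (ρ * (1 - exp (-(a/ρ))))^M * (ρ * (1 - exp (-(b/ρ))))^K * (ρ⁻¹)^(m+p+q)) atTop
      (nhds (a^M * 0^p + b^K * 0^q - a^M * b^K * 0^(m+p+q))) :=
    ((hA.mul (hinv.pow p)).add (hB.mul (hinv.pow q))).sub ((hA.mul hB).mul (hinv.pow (m+p+q)))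
  have hval : (if M < K then a ^ M else if K < M then b ^ K else a ^ M + b ^ M)
      = a^M * 0^p + b^K * 0^q - a^M * b^K * 0^(m+p+q) := by
    rcases lt_trichotomy M K with h | h | h
    · have hp0 : p = 0 := by omega
      simp [if_pos h, hp0, zero_pow (show q ≠ 0 by omega),
        zero_pow (show m + q ≠ 0 by omega)]
    · have hp0 : p = 0 := by omega
      have hq0 : q = 0 := by omega
      have h1 : ¬ M < K := by omega
      have h2 : ¬ K < M := by omega
      simp [h1, h2, hp0, hq0, zero_pow (show m ≠ 0 by omega), ← h]
    · have hq0 : q = 0 := by omega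
      have h1 : ¬ M < K := by omega
      simp [h1, if_pos h, hq0, zero_pow (show p ≠ 0 by omega),
        zero_pow (show m + p ≠ 0 by omega)]
  rw [hval]
  refine key.congr' ?_
  filter_upwards [eventually_gt_atTop (0:ℝ)] with ρ hρ
  rw [hF ρ hρ]
  have h1 : ρ ≠ 0 := hρ.ne'
  have hρp : ∀ k : ℕ, ρ ^ k * ρ⁻¹ ^ k = 1 := fun k => by
    rw [inv_pow, mul_inv_cancel₀ (pow_ne_zero _ h1)]
  set u := 1 - exp (-(a/ρ))
  set v := 1 - exp (-(b/ρ))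
  calc (ρ*u)^M * ρ⁻¹^p + (ρ*v)^K * ρ⁻¹^q - (ρ*u)^M*(ρ*v)^K*ρ⁻¹^(m+p+q)
      = (ρ^m * u^M) * (ρ^p * ρ⁻¹^p) + (ρ^m * v^K) * (ρ^q * ρ⁻¹^q)
        - (ρ^m * (u^M * v^K)) * (ρ^(m+p+q) * ρ⁻¹^(m+p+q)) := by
          rw [mul_pow, mul_pow, hp, hq]; ring
    _ = ρ^m * (1 - (1 - u^M)*(1 - v^K)) := by rw [hρp, hρp, hρp]; ring
end

section
/- Let ρ > 0, γ > 0 and γ_s > 0, and set c₁ = γ/ρ and c₂ = γ_s·(γ + 1)/ρ. For all h, g > c₁, the secondary outage condition f(h, g) < γ_s holds if and only if either (g ≤ h and g < c₁ + c₂) or (h < g and g < γ_s·(γ + 1)·h/(h·ρ − γ)). -/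
/-- With `c₁ = γ/ρ` and `c₂ = γs·(γ+1)/ρ`, for all `h, g > c₁`,
the secondary outage condition `f h g < γs` (with
`f h g = g·(min h g·ρ - γ)/((γ+1)·min h g)` when `min h g > γ/ρ`, else `0`)
holds iff `(g ≤ h ∧ g < c₁ + c₂)` or `(h < g ∧ g < γs·(γ+1)·h/(h·ρ - γ))`. -/
theorem stmt12 (ρ γ γs : ℝ) (hρ : 0 < ρ) (hγ : 0 < γ) (hγs : 0 < γs)
    (f : ℝ → ℝ → ℝ)
    (hf : ∀ h g : ℝ, f h g =
      if γ / ρ < min h g then g * (min h g * ρ - γ) / ((γ + 1) * min h g) else 0)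
    (c₁ c₂ : ℝ) (hc₁ : c₁ = γ / ρ) (hc₂ : c₂ = γs * (γ + 1) / ρ) :
    ∀ h g : ℝ, c₁ < h → c₁ < g →
      (f h g < γs ↔
        (g ≤ h ∧ g < c₁ + c₂) ∨ (h < g ∧ g < γs * (γ + 1) * h / (h * ρ - γ))) := by
  intro h g hh hg
  have hc₁pos : 0 < c₁ := by rw [hc₁]; positivity
  have hgpos : 0 < g := hc₁pos.trans hg
  have hhpos : 0 < h := hc₁pos.trans hh
  have hγ1 : 0 < γ + 1 := by linarith
  have hmin : γ / ρ < min h g := by rw [← hc₁]; exact lt_min hh hg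
  rw [hf, if_pos hmin]
  rcases le_or_gt g h with hle | hlt
  · rw [min_eq_right hle]
    have h1 : g * (g * ρ - γ) / ((γ + 1) * g) = (g * ρ - γ) / (γ + 1) := by
      field_simp
    rw [h1, div_lt_iff₀ hγ1]
    constructor
    · intro hlt'
      left
      refine ⟨hle, ?_⟩
      rw [hc₁, hc₂, ← add_div, lt_div_iff₀ hρ]
      nlinarith
    · rintro (⟨_, hg2⟩ | ⟨hgt, _⟩)
      · rw [hc₁, hc₂, ← add_div, lt_div_iff₀ hρ] at hg2
        nlinarith
      · linarith
  · rw [min_eq_left hlt.le]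
    have hden : 0 < h * ρ - γ := by
      rw [hc₁, div_lt_iff₀ hρ] at hh
      linarith
    have key : g * (h * ρ - γ) / ((γ + 1) * h) < γs ↔
        g < γs * (γ + 1) * h / (h * ρ - γ) := by
      rw [div_lt_iff₀ (by positivity), lt_div_iff₀ hden]
      constructor <;> intro <;> nlinarith
    rw [key]
    constructor
    · intro hlt'
      right
      exact ⟨hlt, hlt'⟩
    · rintro (⟨hle, _⟩ | ⟨_, hg2⟩)
      · linarith
      · exact hg2
end
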